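/- Let A be a commutative complex Banach algebra with identity 1 and let a ∈ A. If M_a has a recurrent vector b that is invertible in A, then every vector of A is recurrent for M_a; in particular, M_a is recurrent. -/
import Mathlib


open Filter Topology

/-- If the multiplication operator `M_a` on a commutative complex Banach
algebra with identity has an invertible recurrent vector `b`, then every vector of `A`
is recurrent for `M_a`; in particular `M_a` is recurrent. -/
theorem recurrent_of_invertible_recurrent_vector
    (A : Type*) [NormedCommRing A] [NormedAlgebra ℂ A] [CompleteSpace A]
    (a b : A) (hb : IsUnit b)
    (hrec : ∃ n : ℕ → ℕ, StrictMono n ∧ (∀ k, 0 < n k) ∧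
      Tendsto (fun k => a ^ n k * b) atTop (𝓝 b)) :
    (∀ x : A, ∃ n : ℕ → ℕ, StrictMono n ∧ (∀ k, 0 < n k) ∧
      Tendsto (fun k => a ^ n k * x) atTop (𝓝 x)) ∧
    Dense {x : A | ∃ n : ℕ → ℕ, StrictMono n ∧ (∀ k, 0 < n k) ∧
      Tendsto (fun k => a ^ n k * x) atTop (𝓝 x)} := by
  obtain ⟨n, hmono, hpos, hlim⟩ := hrec
  have key : ∀ x : A, Tendsto (fun k => a ^ n k * x) atTop (𝓝 x) := by
    intro x
    have h1 : Tendsto (fun k => a ^ n k * b * (↑hb.unit⁻¹ * x)) atTop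
        (𝓝 (b * (↑hb.unit⁻¹ * x))) := hlim.mul tendsto_const_nhds
    have h2 : (fun k => a ^ n k * b * (↑hb.unit⁻¹ * x)) = fun k => a ^ n k * x := by
      funext k
      have : b * ↑hb.unit⁻¹ = 1 := by
        exact hb.mul_val_inv
      rw [mul_assoc, ← mul_assoc b, this, one_mul]
    have h3 : b * (↑hb.unit⁻¹ * x) = x := by
      have : b * ↑hb.unit⁻¹ = 1 := by
        exact hb.mul_val_inv
      rw [← mul_assoc, this, one_mul]
    rwa [h2, h3] at h1
  refine ⟨fun x => ⟨n, hmono, hpos, key x⟩, ?_⟩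
  have : {x : A | ∃ n : ℕ → ℕ, StrictMono n ∧ (∀ k, 0 < n k) ∧
      Tendsto (fun k => a ^ n k * x) atTop (𝓝 x)} = Set.univ := by
    ext x; simp only [Set.mem_setOf_eq, Set.mem_univ, iff_true]
    exact ⟨n, hmono, hpos, key x⟩
  rw [this]; exact dense_univ
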